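/- Let a, b, c be complex numbers with positive real parts, let γ be any complex number, x a real number, and t a complex number with |t| < 1/2. Then ∑_{n=0}^{∞} [₃F₂(−n, a+ix, a−ix; a+b, a+c; 1)/n!] · (γ)_n · tⁿ = (1−t)^{−γ} · ∑_{k=0}^{∞} [(γ)_k (a+ix)_k (a−ix)_k / ((a+b)_k (a+c)_k k!)] · (t/(t−1))^k, where both series converge absolutely (note |t/(t−1)| < 1 when |t| < 1/2) and (1−t)^{−γ} is the principal branch. -/

import Mathlib

open Finset Filter Topology

/-- The Pochhammer symbol (rising factorial): `(w)_k = w (w+1) ⋯ (w+k−1)`. -/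
noncomputable def poch (w : ℂ) (k : ℕ) : ℂ := ∏ i ∈ Finset.range k, (w + i)

/-- real rising factorial -/
noncomputable def pr (A : ℝ) (k : ℕ) : ℝ := ∏ i ∈ Finset.range k, (A + i)

lemma poch_zero (w : ℂ) : poch w 0 = 1 := by simp [poch]

lemma poch_succ (w : ℂ) (k : ℕ) : poch w (k+1) = poch w k * (w + k) := Finset.prod_range_succ _ _

lemma pr_succ (A : ℝ) (k : ℕ) : pr A (k+1) = pr A k * (A + k) := Finset.prod_range_succ _ _

lemma pr_pos {A : ℝ} (hA : 0 < A) (k : ℕ) : 0 < pr A k :=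
  Finset.prod_pos fun i _ => by positivity

lemma abs_poch_le (w : ℂ) (k : ℕ) : ‖poch w k‖ ≤ pr (‖w‖) k := by
  rw [poch, pr, norm_prod]
  refine Finset.prod_le_prod (fun i _ => by positivity) (fun i _ => ?_)
  calc ‖w + i‖ ≤ ‖w‖ + ‖(i:ℂ)‖ := norm_add_le _ _
  _ = ‖w‖ + i := by rw [Complex.norm_natCast]

lemma pr_le_abs_poch {w : ℂ} (hw : 0 < w.re) (k : ℕ) : pr w.re k ≤ ‖poch w k‖ := by
  rw [poch, pr, norm_prod]
  refine Finset.prod_le_prod (fun i _ => by positivity) (fun i _ => ?_)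
  have : w.re + i = (w + i).re := by simp
  rw [this]; exact Complex.re_le_norm _

lemma pr_mono {A B : ℝ} (hA : 0 ≤ A) (h : A ≤ B) (k : ℕ) : pr A k ≤ pr B k :=
  Finset.prod_le_prod (fun i _ => by positivity) (fun i _ => by linarith)

lemma poch_ne_zero {w : ℂ} (hw : 0 < w.re) (k : ℕ) : poch w k ≠ 0 := by
  have := pr_le_abs_poch hw k
  have h2 := pr_pos hw k
  intro h; rw [h] at this; simp at this; linarith

lemma poch_add (w : ℂ) (k m : ℕ) : poch w (k + m) = poch w k * poch (w + k) m := by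
  induction m with
  | zero => simp [poch_zero]
  | succ m ih =>
    rw [show k + (m+1) = (k+m)+1 from rfl, poch_succ, ih, poch_succ, mul_assoc]
    congr 2
    push_cast; ring

lemma pr_add (A : ℝ) (k m : ℕ) : pr A (k + m) = pr A k * pr (A + k) m := by
  induction m with
  | zero => simp [pr]
  | succ m ih =>
    rw [show k + (m+1) = (k+m)+1 from rfl, pr_succ, ih, pr_succ, mul_assoc]
    congr 2
    push_cast; ring

lemma tendsto_aux (A B : ℝ) : Tendsto (fun m : ℕ => (A + m)/(B + m)) atTop (𝓝 1) := by
  have h1 : Tendsto (fun m : ℕ => (A / m + 1)/(B / m + 1)) atTop (𝓝 1) := by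
    have hA : Tendsto (fun m : ℕ => A / m + 1) atTop (𝓝 1) := by
      simpa using (tendsto_const_div_atTop_nhds_zero_nat A).add tendsto_const_nhds (b := 1)
    have hB : Tendsto (fun m : ℕ => B / m + 1) atTop (𝓝 1) := by
      simpa using (tendsto_const_div_atTop_nhds_zero_nat B).add tendsto_const_nhds (b := 1)
    convert hA.div hB one_ne_zero using 2 <;> norm_num
  refine h1.congr' ?_
  filter_upwards [eventually_gt_atTop 0] with m hm
  have hm' : (m:ℝ) ≠ 0 := Nat.cast_ne_zero.mpr hm.ne'
  field_simp

lemma summable_of_ratio_pos {f g : ℕ → ℝ} (hpos : ∀ m, 0 < f m)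
    (hg : ∀ m, f (m+1) = g m * f m) {L : ℝ} (hL : L < 1)
    (hten : Tendsto g atTop (𝓝 L)) : Summable f := by
  refine summable_of_ratio_test_tendsto_lt_one hL
    (Eventually.of_forall fun m => (hpos m).ne') ?_
  refine hten.congr fun m => ?_
  rw [Real.norm_eq_abs, Real.norm_eq_abs, abs_of_pos (hpos _), abs_of_pos (hpos _), hg,
    mul_div_assoc, div_self (hpos m).ne', mul_one]

lemma summable_W {A B C D E : ℝ} (hA : 0 < A) (hB : 0 < B) (hC : 0 < C) (hD : 0 < D)
    (hE : 0 < E) {z : ℝ} (hz0 : 0 ≤ z) (hz : z < 1) :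
    Summable (fun k : ℕ => pr A k * pr B k * pr C k / (pr D k * pr E k * k.factorial) * z ^ k) := by
  set z' := (z+1)/2 with hz'
  have hz'0 : 0 < z' := by rw [hz']; linarith
  have hz'1 : z' < 1 := by rw [hz']; linarith
  have hzz' : z ≤ z' := by rw [hz']; linarith
  have hsum : Summable
      (fun k : ℕ => pr A k * pr B k * pr C k / (pr D k * pr E k * k.factorial) * z' ^ k) := by
    refine summable_of_ratio_pos (g := fun k => ((A+k)/(D+k)) * ((B+k)/(E+k)) * ((C+k)/(1+k)) * z')
      (fun k => ?_) (fun k => ?_) hz'1 ?_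
    · have := pr_pos hA k; have := pr_pos hB k; have := pr_pos hC k
      have := pr_pos hD k; have := pr_pos hE k
      have := Nat.factorial_pos k
      positivity
    · have h1 := (pr_pos hA k).ne'; have h2 := (pr_pos hB k).ne'; have h3 := (pr_pos hC k).ne'
      have h4 := (pr_pos hD k).ne'; have h5 := (pr_pos hE k).ne'
      have h6 : ((k.factorial : ℝ)) ≠ 0 := Nat.cast_ne_zero.mpr (Nat.factorial_pos k).ne'
      have h7 : (A : ℝ) + k ≠ 0 := by positivity
      have h8 : (B : ℝ) + k ≠ 0 := by positivity
      have h9 : (C : ℝ) + k ≠ 0 := by positivity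
      have h10 : (D : ℝ) + k ≠ 0 := by positivity
      have h11 : (E : ℝ) + k ≠ 0 := by positivity
      have h12 : (1 : ℝ) + k ≠ 0 := by positivity
      rw [pr_succ, pr_succ, pr_succ, pr_succ, pr_succ, Nat.factorial_succ]
      push_cast
      field_simp
      ring
    · have := ((((tendsto_aux A D).mul (tendsto_aux B E)).mul (tendsto_aux C 1)).mul_const z')
      simpa using this
  refine Summable.of_nonneg_of_le (fun k => ?_) (fun k => ?_) hsum
  · have := pr_pos hA k; have := pr_pos hB k; have := pr_pos hC k
    have := pr_pos hD k; have := pr_pos hE k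
    have := Nat.factorial_pos k
    positivity
  · have hq : 0 ≤ pr A k * pr B k * pr C k / (pr D k * pr E k * k.factorial) := by
      have := pr_pos hA k; have := pr_pos hB k; have := pr_pos hC k
      have := pr_pos hD k; have := pr_pos hE k
      have := Nat.factorial_pos k
      positivity
    exact mul_le_mul_of_nonneg_left (pow_le_pow_left₀ hz0 hzz' k) hq

lemma summable_binom {A : ℝ} (hA : 0 < A) {x : ℝ} (hx0 : 0 ≤ x) (hx : x < 1) :
    Summable (fun m : ℕ => pr A m * x ^ m / m.factorial) := by
  have := summable_W hA one_pos one_pos one_pos one_pos hx0 hx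
  refine this.congr fun m => ?_
  have h1 := (pr_pos one_pos m).ne'
  have h6 : ((m.factorial : ℝ)) ≠ 0 := Nat.cast_ne_zero.mpr (Nat.factorial_pos m).ne'
  field_simp

lemma summable_deriv_binom {A : ℝ} (hA : 0 < A) {x : ℝ} (hx0 : 0 < x) (hx : x < 1) :
    Summable (fun m : ℕ => pr A m * m * x ^ (m-1) / m.factorial) := by
  refine (summable_nat_add_iff 1).mp ?_
  have hsum : Summable (fun m : ℕ => pr A (m+1) * x ^ m / m.factorial) := by
    refine summable_of_ratio_pos (g := fun m => ((A+1+m)/(1+m)) * x)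
      (fun m => ?_) (fun m => ?_) hx ?_
    · have := pr_pos hA (m+1); have := Nat.factorial_pos m
      positivity
    · have h1 : ((m.factorial : ℝ)) ≠ 0 := Nat.cast_ne_zero.mpr (Nat.factorial_pos m).ne'
      have h2 : (1:ℝ) + m ≠ 0 := by positivity
      rw [show m+1+1 = (m+1)+1 from rfl, pr_succ, Nat.factorial_succ]
      push_cast
      field_simp
      ring
    · simpa using (tendsto_aux (A+1) 1).mul_const x
  refine hsum.congr fun m => ?_
  have h1 : ((m.factorial : ℝ)) ≠ 0 := Nat.cast_ne_zero.mpr (Nat.factorial_pos m).ne'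
  have h2 : (0:ℝ) < 1 + m := by positivity
  rw [Nat.factorial_succ, Nat.add_sub_cancel]
  push_cast
  field_simp

set_option maxHeartbeats 1000000

lemma hasSum_binomial (w : ℂ) {t : ℂ} (ht : ‖t‖ < 1) :
    HasSum (fun m : ℕ => poch w m * t ^ m / m.factorial) ((1 - t) ^ (-w)) := by
  set A : ℝ := ‖w‖ + 1 with hAdef
  have hA : 0 < A := by positivity
  have habs : ∀ m, ‖poch w m‖ ≤ pr A m := fun m =>
    (abs_poch_le w m).trans (pr_mono (norm_nonneg w) (by linarith) m)
  set ρ : ℝ := (‖t‖ + 1)/2 with hρdef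
  have hρ0 : 0 < ρ := by positivity
  have hρ1 : ρ < 1 := by rw [hρdef]; linarith
  have htρ : ‖t‖ < ρ := by rw [hρdef]; linarith
  set B : Set ℂ := Metric.ball 0 ρ with hBdef
  have hBo : IsOpen B := Metric.isOpen_ball
  have hBc : Convex ℝ B := convex_ball 0 ρ
  have hBp : IsPreconnected B := hBc.isPreconnected
  have htB : t ∈ B := by simpa [hBdef, Complex.dist_eq] using htρ
  have h0B : (0:ℂ) ∈ B := by simpa [hBdef] using hρ0
  have hmem : ∀ y ∈ B, ‖y‖ < ρ := by
    intro y hy; simpa [hBdef, Complex.dist_eq] using hy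
  set u : ℕ → ℝ := fun m => pr A m * m * ρ ^ (m-1) / m.factorial with hudef
  have hu : Summable u := summable_deriv_binom hA hρ0 hρ1
  have hderiv : ∀ (m : ℕ) (y : ℂ), y ∈ B →
      HasDerivAt (fun z : ℂ => poch w m * z ^ m / m.factorial)
        (poch w m * (m * y ^ (m-1)) / m.factorial) y := by
    intro m y _
    exact ((hasDerivAt_pow m y).const_mul (poch w m)).div_const _
  have hbound : ∀ (m : ℕ) (y : ℂ), y ∈ B →
      ‖poch w m * (m * y ^ (m-1)) / m.factorial‖ ≤ u m := by
    intro m y hy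
    have h1 : ‖poch w m * (m * y ^ (m-1)) / (m.factorial : ℂ)‖
        = ‖poch w m‖ * (m * ‖y‖ ^ (m-1)) / m.factorial := by
      simp [norm_div, norm_mul, norm_pow, Complex.norm_natCast]
    rw [h1, hudef]
    have h2 : ‖y‖ ^ (m-1) ≤ ρ ^ (m-1) :=
      pow_le_pow_left₀ (norm_nonneg y) (hmem y hy).le _
    have h3 : (0:ℝ) ≤ (m:ℝ) := Nat.cast_nonneg m
    have := habs m
    have h4 : (0:ℝ) < m.factorial := by exact_mod_cast Nat.factorial_pos m
    rw [div_le_div_iff_of_pos_right h4]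
    calc ‖poch w m‖ * ((m:ℝ) * ‖y‖ ^ (m-1))
        ≤ pr A m * ((m:ℝ) * ρ ^ (m-1)) := by
          apply mul_le_mul (habs m) _ (by positivity) (pr_pos hA m).le
          exact mul_le_mul_of_nonneg_left h2 h3
      _ = pr A m * m * ρ ^ (m-1) := by ring
  have h0sum : Summable (fun m : ℕ => poch w m * (0:ℂ) ^ m / m.factorial) := by
    apply summable_of_ne_finset_zero (s := {0})
    intro m hm
    simp only [Finset.mem_singleton] at hm
    rw [zero_pow hm, mul_zero, zero_div]
  set S : ℂ → ℂ := fun y => ∑' m, poch w m * y ^ m / m.factorial with hSdef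
  have key : ∀ y ∈ B, HasDerivAt S (∑' m, poch w m * (m * y ^ (m-1)) / m.factorial) y := by
    intro y hy
    exact hasDerivAt_tsum_of_isPreconnected hu hBo hBp hderiv hbound h0B h0sum hy
  have hSsum : ∀ y ∈ B, Summable (fun m : ℕ => poch w m * y ^ m / m.factorial) := by
    intro y hy
    exact summable_of_summable_hasDerivAt_of_isPreconnected hu hBo hBp hderiv hbound h0B h0sum hy
  -- ODE
  have hODE : ∀ y ∈ B, (1 - y) * (∑' m, poch w m * (m * y ^ (m-1)) / m.factorial) = w * S y := by
    intro y hy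
    set e : ℕ → ℂ := fun m => poch w m * (m * y ^ (m-1)) / m.factorial with hedef
    have he : Summable e := by
      refine Summable.of_norm_bounded hu (fun m => hbound m y hy)
    set T : ℂ := ∑' m, e m with hTdef
    have heT : HasSum e T := he.hasSum
    have he0 : e 0 = 0 := by simp [hedef]
    have hshift : HasSum (fun m => e (m+1)) T := by
      rw [hasSum_nat_add_iff 1]
      simpa [he0] using heT
    have hshift' : HasSum (fun m : ℕ => poch w (m+1) * y ^ m / m.factorial) T := by
      refine hshift.congr_fun fun m => ?_
      rw [hedef]
      simp only [Nat.factorial_succ, Nat.add_sub_cancel]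
      have h1 : ((m:ℂ)+1) ≠ 0 := Nat.cast_add_one_ne_zero m
      have h2 : ((m.factorial : ℂ)) ≠ 0 := Nat.cast_ne_zero.mpr (Nat.factorial_pos m).ne'
      push_cast
      field_simp
    have hS : HasSum (fun m : ℕ => poch w m * y ^ m / m.factorial) (S y) := (hSsum y hy).hasSum
    have h1 : HasSum (fun m : ℕ => w * (poch w m * y ^ m / m.factorial)) (w * S y) :=
      hS.mul_left w
    have h2 : HasSum (fun m : ℕ => poch w m * m * y ^ m / m.factorial) (y * T) := by
      refine (heT.mul_left y).congr_fun fun m => ?_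
      rw [hedef]
      cases m with
      | zero => simp
      | succ m =>
        simp only [Nat.add_sub_cancel]
        push_cast
        rw [pow_succ]
        ring
    have h3 := h1.add h2
    have h4 : HasSum (fun m : ℕ => poch w (m+1) * y ^ m / m.factorial)
        (w * S y + y * T) := by
      refine h3.congr_fun fun m => ?_
      rw [poch_succ]
      ring
    have hTeq : T = w * S y + y * T := hshift'.unique h4
    linear_combination hTeq
  -- cpow derivative and constancy
  have hre : ∀ y ∈ B, 0 < (1 - y).re := by
    intro y hy
    have := (Complex.re_le_norm y).trans_lt (hmem y hy)
    simp only [Complex.sub_re, Complex.one_re]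
    linarith
  have hne : ∀ y ∈ B, (1:ℂ) - y ≠ 0 := by
    intro y hy h
    have := hre y hy
    rw [h] at this
    simp at this
  have hcp : ∀ y ∈ B, HasDerivAt (fun z : ℂ => (1 - z) ^ w) (w * (1-y) ^ (w-1) * (-1)) y := by
    intro y hy
    exact ((hasDerivAt_id y).const_sub 1).cpow_const
      (Complex.mem_slitPlane_iff.mpr (Or.inl (hre y hy)))
  have hgconst : ∀ y ∈ B, HasDerivAt (fun z => S z * (1 - z) ^ w) 0 y := by
    intro y hy
    have hd := (key y hy).mul (hcp y hy)
    refine hd.congr_deriv ?_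
    have hfac : ((1:ℂ) - y) ^ w = (1-y) ^ (w-1) * (1-y) := by
      conv_lhs => rw [show w = (w-1) + 1 by ring]
      rw [Complex.cpow_add _ _ (hne y hy), Complex.cpow_one]
    rw [hfac]
    linear_combination ((1:ℂ)-y)^(w-1) * hODE y hy
  -- g is constant on B
  have hdiff : DifferentiableOn ℂ (fun z => S z * (1 - z) ^ w) B := by
    intro y hy
    exact ((hgconst y hy).differentiableAt).differentiableWithinAt
  have hfzero : ∀ y ∈ B, fderivWithin ℂ (fun z => S z * (1 - z) ^ w) B y = 0 := by
    intro y hy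
    have h := ((hgconst y hy).hasFDerivAt).hasFDerivWithinAt (s := B)
    rw [h.fderivWithin (hBo.uniqueDiffWithinAt hy)]
    ext
    simp
  have hconst := hBc.is_const_of_fderivWithin_eq_zero hdiff hfzero htB h0B
  have hS0 : S 0 = 1 := by
    show (∑' m : ℕ, poch w m * (0:ℂ) ^ m / m.factorial) = 1
    rw [tsum_eq_single 0 ?_]
    · simp [poch_zero]
    · intro m hm
      rw [zero_pow hm, mul_zero, zero_div]
  have hval : S t * (1 - t) ^ w = 1 := by
    rw [hconst]
    simp [hS0]
  have hfin : S t = (1 - t) ^ (-w) := by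
    rw [Complex.cpow_neg]
    have hP : ((1:ℂ) - t) ^ w ≠ 0 := by
      rw [Ne, Complex.cpow_eq_zero_iff]
      simp [hne t htB]
    field_simp
    linear_combination hval
  exact hfin ▸ (hSsum t htB).hasSum

lemma poch_ofReal (A : ℝ) (m : ℕ) : poch (A:ℂ) m = ((pr A m : ℝ) : ℂ) := by
  rw [poch, pr, Complex.ofReal_prod]
  exact Finset.prod_congr rfl fun i _ => by push_cast; ring

lemma hasSum_binomial_real (A : ℝ) {x : ℝ} (hx0 : 0 ≤ x) (hx : x < 1) :
    HasSum (fun m : ℕ => pr A m * x ^ m / m.factorial) ((1-x) ^ (-A) : ℝ) := by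
  have h := hasSum_binomial (A:ℂ) (t := (x:ℂ))
    (by rwa [Complex.norm_real, Real.norm_eq_abs, abs_of_nonneg hx0])
  rw [← Complex.hasSum_ofReal]
  have h1 : (fun m : ℕ => ((pr A m * x ^ m / m.factorial : ℝ) : ℂ))
      = fun m : ℕ => poch (A:ℂ) m * (x:ℂ) ^ m / m.factorial := by
    funext m
    rw [poch_ofReal]
    push_cast
    ring
  rw [h1]
  have h2 : (((1-x) ^ (-A) : ℝ) : ℂ) = (1 - (x:ℂ)) ^ (-(A:ℂ)) := by
    rw [Complex.ofReal_cpow (by linarith) (-A)]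
    push_cast
    ring_nf
  rw [h2]
  exact h

lemma poch_neg_nat {n k : ℕ} (h : k ≤ n) :
    poch (-(n:ℂ)) k * ((n-k).factorial : ℂ) = (-1)^k * (n.factorial : ℂ) := by
  induction k with
  | zero => simp [poch_zero]
  | succ k ih =>
    have hk : k ≤ n := Nat.le_of_succ_le h
    have hkn : k < n := h
    have hnk : (((n - k : ℕ) : ℂ)) ≠ 0 := by
      exact_mod_cast Nat.cast_ne_zero.mpr (Nat.sub_ne_zero_of_lt hkn)
    apply mul_right_cancel₀ hnk
    have hfac : ((n - k).factorial : ℂ) = ((n - (k+1)).factorial : ℂ) * ((n - k : ℕ) : ℂ) := by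
      rw [show n - k = (n - (k+1)) + 1 by omega, Nat.factorial_succ]
      push_cast
      ring
    calc poch (-(n:ℂ)) (k+1) * ((n-(k+1)).factorial : ℂ) * ((n - k : ℕ) : ℂ)
        = poch (-(n:ℂ)) k * ((n-k).factorial : ℂ) * (-(n:ℂ) + k) := by
          rw [poch_succ, hfac]; ring
      _ = (-1)^k * (n.factorial : ℂ) * (-(n:ℂ) + k) := by rw [ih hk]
      _ = (-1)^(k+1) * (n.factorial : ℂ) * ((n - k : ℕ) : ℂ) := by
          have : ((n - k : ℕ) : ℂ) = (n:ℂ) - k := by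
            push_cast [Nat.cast_sub hk]; ring
          rw [this, pow_succ]
          ring

/-- The terminating hypergeometric sum
`₃F₂(−n, p, q; r, s; 1) = ∑_{k=0}^n ((−n)_k (p)_k (q)_k)/((r)_k (s)_k k!)`. -/
noncomputable def F32 (n : ℕ) (p q r s : ℂ) : ℂ :=
  ∑ k ∈ Finset.range (n + 1),
    poch (-(n : ℂ)) k * poch p k * poch q k / (poch r k * poch s k * (k.factorial : ℂ))

lemma norm_div_le_aux {num den : ℂ} {N D : ℝ} (hn : ‖num‖ ≤ N) (hD : 0 < D)
    (hd : D ≤ ‖den‖) : ‖num / den‖ ≤ N / D := by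
  rw [norm_div]
  exact div_le_div₀ (le_trans (norm_nonneg _) hn) hn hD hd

/-- For `a, b, c` with positive real parts, any complex `γ`, real `x` and complex `t` with
`|t| < 1/2`:
`∑_{n≥0} [₃F₂(−n, a+ix, a−ix; a+b, a+c; 1)/n!] (γ)_n tⁿ
  = (1−t)^{−γ} ∑_{k≥0} [(γ)_k (a+ix)_k (a−ix)_k / ((a+b)_k (a+c)_k k!)] (t/(t−1))^k`,
both series converging absolutely. -/
theorem stmt10 (a b c : ℂ) (ha : 0 < a.re) (hb : 0 < b.re) (hc : 0 < c.re)
    (γ : ℂ) (x : ℝ) (t : ℂ) (ht : ‖t‖ < 1/2) :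
    Summable (fun n : ℕ =>
      F32 n (a + Complex.I * x) (a - Complex.I * x) (a + b) (a + c) / (n.factorial : ℂ) *
        poch γ n * t ^ n) ∧
    Summable (fun k : ℕ =>
      poch γ k * poch (a + Complex.I * x) k * poch (a - Complex.I * x) k /
        (poch (a + b) k * poch (a + c) k * (k.factorial : ℂ)) * (t / (t - 1)) ^ k) ∧
    (∑' n : ℕ,
      F32 n (a + Complex.I * x) (a - Complex.I * x) (a + b) (a + c) / (n.factorial : ℂ) *
        poch γ n * t ^ n)
      = (1 - t) ^ (-γ) *
        ∑' k : ℕ,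
          poch γ k * poch (a + Complex.I * x) k * poch (a - Complex.I * x) k /
            (poch (a + b) k * poch (a + c) k * (k.factorial : ℂ)) * (t / (t - 1)) ^ k := by
  set p : ℂ := a + Complex.I * x with hpdef
  set q : ℂ := a - Complex.I * x with hqdef
  set r : ℂ := a + b with hrdef
  set s : ℂ := a + c with hsdef
  have hr_re : 0 < r.re := by rw [hrdef, Complex.add_re]; linarith
  have hs_re : 0 < s.re := by rw [hsdef, Complex.add_re]; linarith
  have ht1 : ‖t‖ < 1 := by linarith
  have ht1' : (1:ℂ) - t ≠ 0 := by
    intro h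
    have : t = 1 := by linear_combination -h
    rw [this] at ht1; simp at ht1
  have htm1 : t - 1 ≠ 0 := by
    intro h; apply ht1'; linear_combination -h
  set z : ℂ := t / (t - 1) with hzdef
  have hzabs : ‖z‖ < 1 := by
    rw [hzdef, norm_div, div_lt_one (by
      simpa using norm_pos_iff.mpr htm1)]
    calc ‖t‖ < 1/2 := ht
    _ ≤ ‖t - 1‖ := by
        have h1 : (1:ℝ) ≤ ‖t‖ + ‖t-1‖ := by
          have := norm_add_le t (1 - t)
          simp only [add_sub_cancel] at this
          calc (1:ℝ) = ‖(1:ℂ)‖ := by simp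
          _ ≤ ‖t‖ + ‖1 - t‖ := by
              calc ‖(1:ℂ)‖ = ‖t + (1 - t)‖ := by ring_nf
              _ ≤ _ := norm_add_le _ _
          _ = ‖t‖ + ‖t - 1‖ := by rw [← norm_neg (1-t)]; ring_nf
        linarith
  set x0 : ℝ := ‖t‖ with hx0def
  have hx00 : 0 ≤ x0 := norm_nonneg t
  have hx01 : x0 < 1 := ht1
  set z0 : ℝ := x0 / (1 - x0) with hz0def
  have hx0h : 0 < 1 - x0 := by linarith
  have hz00 : 0 ≤ z0 := by rw [hz0def]; positivity
  have hz01 : z0 < 1 := by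
    rw [hz0def, div_lt_one (by linarith)]
    linarith [ht]
  set Ap : ℝ := ‖p‖ + 1 with hApdef
  set Aq : ℝ := ‖q‖ + 1 with hAqdef
  set G : ℝ := ‖γ‖ + 1 with hGdef
  have hAp : 0 < Ap := by positivity
  have hAq : 0 < Aq := by positivity
  have hG : 0 < G := by positivity
  have habs_le : ∀ (w : ℂ) (k : ℕ), ‖poch w k‖ ≤ pr (‖w‖ + 1) k :=
    fun w k => (abs_poch_le w k).trans (pr_mono (norm_nonneg w) (by linarith) k)
  have hden : ∀ k : ℕ, pr r.re k * pr s.re k * k.factorial ≤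
      ‖poch r k * poch s k * (k.factorial : ℂ)‖ := by
    intro k
    rw [norm_mul, norm_mul, Complex.norm_natCast]
    have h1 := pr_le_abs_poch hr_re k
    have h2 := pr_le_abs_poch hs_re k
    have h3 := (pr_pos hr_re k).le
    have h4 := (pr_pos hs_re k).le
    have h5 : (0:ℝ) ≤ (k.factorial : ℝ) := Nat.cast_nonneg _
    gcongr
  have hdenpos : ∀ k : ℕ, (0:ℝ) < pr r.re k * pr s.re k * k.factorial := by
    intro k
    have := pr_pos hr_re k; have := pr_pos hs_re k
    have : (0:ℝ) < (k.factorial : ℝ) := by exact_mod_cast Nat.factorial_pos k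
    positivity
  set d : ℕ → ℂ := fun k => poch p k * poch q k / (poch r k * poch s k * (k.factorial : ℂ))
    with hddef
  have hdbound : ∀ k, ‖d k‖ ≤ pr Ap k * pr Aq k / (pr r.re k * pr s.re k * k.factorial) := by
    intro k
    apply norm_div_le_aux _ (hdenpos k) (hden k)
    rw [norm_mul]
    exact mul_le_mul (habs_le p k) (habs_le q k) (norm_nonneg _) (pr_pos hAp k).le
  set f : ℕ × ℕ → ℂ := fun km =>
    d km.1 * (-1)^km.1 * poch γ (km.2 + km.1) * t ^ (km.2 + km.1) / ((km.2).factorial : ℂ)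
    with hfdef
  set Ck : ℕ → ℝ := fun k =>
    pr Ap k * pr Aq k / (pr r.re k * pr s.re k * k.factorial) * pr G k * x0 ^ k with hCkdef
  set M : ℕ × ℕ → ℝ := fun km =>
    Ck km.1 * (pr (G + km.1) km.2 * x0 ^ km.2 / (km.2).factorial) with hMdef
  have hCkpos : ∀ k, 0 ≤ Ck k := by
    intro k
    have h1 := pr_pos hAp k; have h2 := pr_pos hAq k; have h3 := pr_pos hr_re k
    have h4 := pr_pos hs_re k; have h5 := pr_pos hG k
    have h6 : (0:ℝ) < k.factorial := by exact_mod_cast Nat.factorial_pos k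
    rw [hCkdef]
    positivity
  have hMle : ∀ km : ℕ × ℕ, ‖f km‖ ≤ M km := by
    rintro ⟨k, m⟩
    rw [hfdef, hMdef]
    simp only [norm_div, norm_mul, Complex.norm_natCast, norm_pow]
    have h1 : ‖(-1 : ℂ)‖ = 1 := by simp
    rw [h1, one_pow, mul_one]
    have h2 : ‖poch γ (m + k)‖ ≤ pr G k * pr (G + k) m := by
      calc ‖poch γ (m + k)‖ ≤ pr G (m + k) := habs_le γ (m+k)
      _ = pr G (k + m) := by rw [add_comm]
      _ = pr G k * pr (G + k) m := pr_add G k m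
    have h3 : (0:ℝ) < (m.factorial : ℝ) := by exact_mod_cast Nat.factorial_pos m
    rw [div_le_iff₀ h3] at *
    have h4 : ‖d k‖ ≤ pr Ap k * pr Aq k / (pr r.re k * pr s.re k * k.factorial) := by
      exact hdbound k
    calc ‖d k‖ * ‖poch γ (m + k)‖ * ‖t‖ ^ (m + k)
        ≤ (pr Ap k * pr Aq k / (pr r.re k * pr s.re k * k.factorial)) *
            (pr G k * pr (G + k) m) * ‖t‖ ^ (m + k) := by
          have h5 : (0:ℝ) ≤ ‖t‖ ^ (m+k) := by positivity
          apply mul_le_mul_of_nonneg_right _ h5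
          apply mul_le_mul h4 h2 (norm_nonneg _) _
          have := pr_pos hr_re k; have := pr_pos hs_re k; have := pr_pos hAp k
          have := pr_pos hAq k
          have h6 : (0:ℝ) < k.factorial := by exact_mod_cast Nat.factorial_pos k
          positivity
      _ = Ck k * (pr (G + k) m * x0 ^ m / m.factorial) * m.factorial := by
          rw [hCkdef, hx0def]
          simp only
          rw [pow_add]
          field_simp
  have hMnn : ∀ km : ℕ × ℕ, 0 ≤ M km := by
    rintro ⟨k, m⟩
    exact le_trans (norm_nonneg _) (hMle ⟨k, m⟩)
  have hGk : ∀ k : ℕ, (0:ℝ) < G + k := fun k => by positivity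
  have hMsum : Summable M := by
    refine (summable_prod_of_nonneg hMnn).mpr ⟨fun k => ?_, ?_⟩
    · exact ((summable_binom (hGk k) hx00 hx01).mul_left (Ck k)).congr fun m => rfl
    · have hv : ∀ k : ℕ, HasSum (fun m => M (k, m)) (Ck k * (1-x0) ^ (-(G + (k:ℝ)))) :=
        fun k => ((hasSum_binomial_real (G + (k:ℝ)) hx00 hx01).mul_left (Ck k)).congr_fun
          fun m => rfl
      have hW := (summable_W hG hAp hAq hr_re hs_re hz00 hz01).mul_left
        ((1-x0) ^ (-G) : ℝ)
      refine hW.congr fun k => ?_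
      rw [(hv k).tsum_eq, hCkdef]
      have hrw : (1-x0) ^ (-(G + (k:ℝ))) = (1-x0) ^ (-G) * ((1-x0) ^ (k:ℕ))⁻¹ := by
        rw [show -(G + (k:ℝ)) = -G + -(k:ℝ) by ring, Real.rpow_add hx0h,
          Real.rpow_neg hx0h.le (k:ℝ), Real.rpow_natCast]
      rw [hrw, hz0def]
      simp only
      rw [div_pow]
      ring
  have hfsum : Summable f := by
    apply Summable.of_norm
    exact Summable.of_nonneg_of_le (fun km => norm_nonneg _) hMle hMsum
  have hterm : ∀ n : ℕ, F32 n p q r s / (n.factorial : ℂ) * poch γ n * t ^ n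
      = ∑ k ∈ Finset.range (n+1), f (k, n - k) := by
    intro n
    rw [F32, Finset.sum_div, Finset.sum_mul, Finset.sum_mul]
    refine Finset.sum_congr rfl fun k hk => ?_
    have hkn : k ≤ n := Nat.lt_succ_iff.mp (Finset.mem_range.mp hk)
    have hnk : (n - k) + k = n := Nat.sub_add_cancel hkn
    rw [hfdef]
    simp only [hnk]
    have hpoch := poch_neg_nat hkn
    have hnfac : ((n.factorial : ℂ)) ≠ 0 := Nat.cast_ne_zero.mpr (Nat.factorial_pos n).ne'
    have hnkfac : (((n-k).factorial : ℂ)) ≠ 0 := Nat.cast_ne_zero.mpr (Nat.factorial_pos _).ne'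
    have hkfac : ((k.factorial : ℂ)) ≠ 0 := Nat.cast_ne_zero.mpr (Nat.factorial_pos k).ne'
    have hrne : poch r k ≠ 0 := poch_ne_zero hr_re k
    have hsne : poch s k ≠ 0 := poch_ne_zero hs_re k
    have hpochdiv : poch (-(n:ℂ)) k = (-1)^k * (n.factorial : ℂ) / ((n-k).factorial : ℂ) := by
      rw [eq_div_iff hnkfac]; exact hpoch
    have hsplit : poch (-(n:ℂ)) k * poch p k * poch q k /
        (poch r k * poch s k * (k.factorial : ℂ)) = poch (-(n:ℂ)) k * d k := by
      rw [hddef]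
      simp only
      ring
    rw [hsplit, hpochdiv]
    field_simp
  have hfsig : Summable (f ∘ (Finset.HasAntidiagonal.sigmaAntidiagonalEquivProd (A := ℕ))) :=
    (Finset.HasAntidiagonal.sigmaAntidiagonalEquivProd (A := ℕ)).summable_iff.mpr hfsum
  have hfib : ∀ n : ℕ,
      (∑' kp : (Finset.HasAntidiagonal.antidiagonal n : Finset (ℕ×ℕ)), f kp)
        = ∑ k ∈ Finset.range (n+1), f (k, n-k) := by
    intro n
    rw [Finset.tsum_subtype (Finset.HasAntidiagonal.antidiagonal n) f]
    exact Finset.Nat.sum_antidiagonal_eq_sum_range_succ_mk f n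
  have hLsum : Summable (fun n : ℕ => F32 n p q r s / (n.factorial : ℂ) * poch γ n * t ^ n) := by
    have h0 := hfsig.sigma
    refine h0.congr fun n => ?_
    rw [hterm n, ← hfib n]
    rfl
  have hLtsum : (∑' n : ℕ, F32 n p q r s / (n.factorial : ℂ) * poch γ n * t ^ n)
      = ∑' km : ℕ × ℕ, f km := by
    calc (∑' n : ℕ, F32 n p q r s / (n.factorial : ℂ) * poch γ n * t ^ n)
        = ∑' n : ℕ, ∑' kp : (Finset.HasAntidiagonal.antidiagonal n : Finset (ℕ×ℕ)), f kp := by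
          refine tsum_congr fun n => ?_
          rw [hterm n, ← hfib n]
      _ = ∑' σ : (Σ n : ℕ, (Finset.HasAntidiagonal.antidiagonal n : Finset (ℕ×ℕ))),
            (f ∘ (Finset.HasAntidiagonal.sigmaAntidiagonalEquivProd (A := ℕ))) σ := (Summable.tsum_sigma hfsig).symm
      _ = ∑' km : ℕ × ℕ, f km := (Finset.HasAntidiagonal.sigmaAntidiagonalEquivProd (A := ℕ)).tsum_eq f
  have hinner : ∀ k : ℕ, HasSum (fun m => f (k, m))
      ((1-t) ^ (-γ) * (poch γ k * poch p k * poch q k /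
        (poch r k * poch s k * (k.factorial : ℂ)) * z ^ k)) := by
    intro k
    have hbin := hasSum_binomial (γ + k) ht1
    have h1 := hbin.mul_left (d k * (-1)^k * poch γ k * t^k)
    have h2 : HasSum (fun m => f (k, m))
        (d k * (-1)^k * poch γ k * t^k * (1-t) ^ (-(γ + (k:ℂ)))) := by
      refine h1.congr_fun fun m => ?_
      rw [hfdef]
      simp only
      rw [add_comm m k, poch_add, pow_add]
      ring
    convert h2 using 1
    have hcp : ((1:ℂ)-t) ^ (-(γ + (k:ℂ))) = (1-t) ^ (-γ) * ((1-t) ^ k)⁻¹ := by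
      rw [show -(γ + (k:ℂ)) = -γ + -(k:ℂ) by ring, Complex.cpow_add _ _ ht1',
        Complex.cpow_neg (1-t) (k:ℂ), Complex.cpow_natCast]
    have hzk : z ^ k = (-1:ℂ)^k * t^k * ((1-t) ^ k)⁻¹ := by
      rw [hzdef, div_pow, show t - 1 = -(1-t) by ring, neg_pow, div_eq_mul_inv, mul_inv]
      have hneg : ((-1:ℂ)^k)⁻¹ = (-1:ℂ)^k := by
        rw [← inv_pow, inv_neg, inv_one]
      rw [hneg]
      ring
    rw [hcp, hzk, hddef]
    simp only
    ring
  have hRHSsum : Summable (fun k : ℕ => poch γ k * poch p k * poch q k /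
      (poch r k * poch s k * (k.factorial : ℂ)) * z ^ k) := by
    have hW := summable_W hG hAp hAq hr_re hs_re (norm_nonneg z) hzabs
    refine Summable.of_norm (Summable.of_nonneg_of_le (fun k => norm_nonneg _)
      (fun k => ?_) hW)
    rw [norm_mul, norm_pow]
    have hnum : ‖poch γ k * poch p k * poch q k‖ ≤ pr G k * pr Ap k * pr Aq k := by
      rw [norm_mul, norm_mul]
      have h1 := pr_pos hG k; have h2 := pr_pos hAp k
      apply mul_le_mul _ (habs_le q k) (norm_nonneg _) (by positivity)
      exact mul_le_mul (habs_le γ k) (habs_le p k) (norm_nonneg _) h1.le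
    have hq := norm_div_le_aux hnum (hdenpos k) (hden k)
    have h5 : (0:ℝ) ≤ ‖z‖ ^ k := by positivity
    calc ‖poch γ k * poch p k * poch q k /
          (poch r k * poch s k * (k.factorial : ℂ))‖ * ‖z‖ ^ k
        ≤ (pr G k * pr Ap k * pr Aq k / (pr r.re k * pr s.re k * k.factorial)) *
          ‖z‖ ^ k := mul_le_mul_of_nonneg_right hq h5
      _ = _ := rfl
  have houter : (∑' km : ℕ × ℕ, f km)
      = (1-t) ^ (-γ) * ∑' k : ℕ, poch γ k * poch p k * poch q k /
          (poch r k * poch s k * (k.factorial : ℂ)) * z ^ k := by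
    rw [Summable.tsum_prod' hfsum (fun k => (hinner k).summable)]
    calc (∑' k : ℕ, ∑' m : ℕ, f (k, m))
        = ∑' k : ℕ, (1-t) ^ (-γ) * (poch γ k * poch p k * poch q k /
            (poch r k * poch s k * (k.factorial : ℂ)) * z ^ k) :=
          tsum_congr fun k => (hinner k).tsum_eq
      _ = _ := tsum_mul_left
  exact ⟨hLsum, hRHSsum, by rw [hLtsum, houter]⟩
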